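/- Let X be a nontrivial mm-space of finite diameter (i.e. μ_X is not a Dirac measure), let 1 ≤ p ≤ +∞, and assume inf{d_X(x,y) : x,y ∈ X, x ≠ y} > 0 if 1 < p < +∞. Let (t_n) be a sequence of positive real numbers with n^{1/(2p)} t_n → 0 as n → ∞ (where n^{1/(2∞)} := 1). Then the sequence {t_n X_p^n}_{n=1}^∞ is a Lévy family, i.e. ObsDiam(t_n X_p^n; -κ) → 0 as n → ∞ for every κ > 0. -/

import Mathlib

open MeasureTheory Filter Topology Bornology
open scoped ENNReal
open scoped NNReal

noncomputable section

/-- The partial diameter `diam(ν; α)` of a Borel measure `ν` on `ℝ`. -/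
def partialDiam (ν : Measure ℝ) (α : ℝ) : ℝ :=
  sInf {r : ℝ | ∃ A : Set ℝ, MeasurableSet A ∧ IsBounded A ∧
    ENNReal.ofReal α ≤ ν A ∧ r = Metric.diam A}



lemma integrable_of_bdd {Y : Type*} [MeasurableSpace Y] {ν : Measure Y} [IsFiniteMeasure ν]
    {f : Y → ℝ} {M : ℝ} (hf : Measurable f) (hM : ∀ x, |f x| ≤ M) : Integrable f ν :=
  ⟨hf.aestronglyMeasurable, HasFiniteIntegral.of_bounded (C := M)
    (ae_of_all _ fun x => by simpa [Real.norm_eq_abs] using hM x)⟩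

/-- variance of a bounded-oscillation function is at most `c ^ 2`. -/
lemma var_le_of_osc {Y : Type*} [MeasurableSpace Y] [Nonempty Y] (ν : Measure Y)
    [IsProbabilityMeasure ν] {h : Y → ℝ} {M c : ℝ} (hmeas : Measurable h)
    (hM : ∀ x, |h x| ≤ M) (hc : ∀ a b, |h a - h b| ≤ c) :
    ∫ x, h x ^ 2 ∂ν - (∫ x, h x ∂ν) ^ 2 ≤ c ^ 2 := by
  obtain ⟨a₀⟩ := ‹Nonempty Y›
  set t := h a₀ with ht
  have hint : Integrable h ν := integrable_of_bdd hmeas hM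
  have hint2 : Integrable (fun x => h x ^ 2) ν :=
    integrable_of_bdd (hmeas.pow_const 2) (M := M ^ 2) (fun x => by
      rw [abs_pow]
      exact pow_le_pow_left₀ (abs_nonneg _) (hM x) 2)
  have hint3 : Integrable (fun x => (h x - t) ^ 2) ν :=
    integrable_of_bdd ((hmeas.sub_const t).pow_const 2) (M := (M + |t|) ^ 2) (fun x => by
      rw [abs_pow]
      refine pow_le_pow_left₀ (abs_nonneg _) ?_ 2
      calc |h x - t| ≤ |h x| + |t| := abs_sub _ _
        _ ≤ M + |t| := by linarith [hM x])
  have key : ∫ x, (h x - t) ^ 2 ∂ν = ∫ x, h x ^ 2 ∂ν - 2 * t * ∫ x, h x ∂ν + t ^ 2 := by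
    have heq : ∀ x, (h x - t) ^ 2 = h x ^ 2 - 2 * t * h x + t ^ 2 := fun x => by ring
    have hint4 : Integrable (fun x => h x ^ 2 - 2 * t * h x) ν := hint2.sub (hint.const_mul (2*t))
    simp_rw [heq]
    rw [integral_add hint4 (integrable_const _),
      integral_sub hint2 (hint.const_mul (2*t)), MeasureTheory.integral_const_mul, integral_const]
    simp
  have hle : ∫ x, (h x - t) ^ 2 ∂ν ≤ c ^ 2 := by
    calc ∫ x, (h x - t) ^ 2 ∂ν ≤ ∫ _x, c ^ 2 ∂ν := ?_
      _ = c ^ 2 := by simp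
    refine integral_mono hint3 (integrable_const _) fun x => ?_
    have := hc x a₀
    nlinarith [abs_nonneg (h x - t), le_abs_self (h x - t), neg_abs_le (h x - t)]
  nlinarith [sq_nonneg ((∫ x, h x ∂ν) - t), hle, key]

lemma efron_stein {X : Type*} [MeasurableSpace X] [Nonempty X] (μ : Measure X)
    [IsProbabilityMeasure μ] {c M : ℝ} :
    ∀ (n : ℕ) (F : (Fin n → X) → ℝ), Measurable F → (∀ x, |F x| ≤ M) →
    (∀ (x y : Fin n → X) (i : Fin n), (∀ j, j ≠ i → x j = y j) → |F x - F y| ≤ c) →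
    ∫ x, F x ^ 2 ∂Measure.pi (fun _ : Fin _ => μ)
      - (∫ x, F x ∂Measure.pi (fun _ : Fin _ => μ)) ^ 2 ≤ n * c ^ 2 := by
  intro n
  induction n with
  | zero =>
    intro F hF hM hFc
    rw [Measure.pi_of_empty _, integral_dirac' _ _ hF.stronglyMeasurable,
      integral_dirac' _ _ (hF.pow_const 2).stronglyMeasurable]
    simp
  | succ n IH =>
    intro F hF hM hFc
    set e := MeasurableEquiv.piFinSuccAbove (fun _ : Fin (n+1) => X) 0 with he
    set ν := Measure.pi (fun _ : Fin n => μ) with hν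
    have hmp : MeasurePreserving e (Measure.pi fun _ : Fin (n+1) => μ) (μ.prod ν) :=
      measurePreserving_piFinSuccAbove (fun _ : Fin (n+1) => μ) 0
    have hmps : MeasurePreserving e.symm (μ.prod ν) (Measure.pi fun _ : Fin (n+1) => μ) :=
      MeasurePreserving.symm e hmp
    set F' : X × (Fin n → X) → ℝ := fun w => F (e.symm w) with hF'def
    have hF' : Measurable F' := hF.comp e.symm.measurable
    have hsymm : ∀ (a : X) (z : Fin n → X), e.symm (a, z) = Fin.insertNth 0 a z := by
      intro a z
      simp [he, MeasurableEquiv.piFinSuccAbove_symm_apply, Fin.insertNth_zero, Fin.consEquiv]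
    have fact1 : ∀ (a a' : X) (z : Fin n → X) (j : Fin (n+1)), j ≠ 0 →
        e.symm (a, z) j = e.symm (a', z) j := by
      intro a a' z j hj
      obtain ⟨k, rfl⟩ := Fin.exists_succAbove_eq hj
      rw [hsymm, hsymm, Fin.insertNth_apply_succAbove, Fin.insertNth_apply_succAbove]
    have fact2 : ∀ (a : X) (z z' : Fin n → X) (j' : Fin n), (∀ k, k ≠ j' → z k = z' k) →
        ∀ j : Fin (n+1), j ≠ (0 : Fin (n+1)).succAbove j' →
        e.symm (a, z) j = e.symm (a, z') j := by
      intro a z z' j' hzz j hj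
      rcases eq_or_ne j 0 with rfl | hj0
      · rw [hsymm, hsymm, Fin.insertNth_apply_same, Fin.insertNth_apply_same]
      · obtain ⟨k, rfl⟩ := Fin.exists_succAbove_eq hj0
        rw [hsymm, hsymm, Fin.insertNth_apply_succAbove, Fin.insertNth_apply_succAbove]
        exact hzz k (fun hk => hj (by rw [hk]))
    set G : (Fin n → X) → ℝ := fun z => ∫ a, F' (a, z) ∂μ with hGdef
    set H : (Fin n → X) → ℝ := fun z => ∫ a, F' (a, z) ^ 2 ∂μ with hHdef
    have hGmeas : Measurable G :=
      hF'.stronglyMeasurable.integral_prod_left'.measurable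
    have hHmeas : Measurable H :=
      (hF'.pow_const 2).stronglyMeasurable.integral_prod_left'.measurable
    have hMnn : 0 ≤ M := le_trans (abs_nonneg _) (hM (Classical.arbitrary _))
    have hGbd : ∀ z, |G z| ≤ M := by
      intro z
      have := norm_integral_le_of_norm_le_const (μ := μ) (f := fun a => F' (a, z)) (C := M)
        (ae_of_all _ fun a => by simpa [Real.norm_eq_abs] using hM (e.symm (a, z)))
      simpa [Real.norm_eq_abs] using this
    have hHbd : ∀ z, |H z| ≤ M ^ 2 := by
      intro z
      have := norm_integral_le_of_norm_le_const (μ := μ) (f := fun a => F' (a, z) ^ 2)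
        (C := M ^ 2) (ae_of_all _ fun a => by
          rw [Real.norm_eq_abs, abs_pow]
          exact pow_le_pow_left₀ (abs_nonneg _) (hM (e.symm (a, z))) 2)
      simpa [Real.norm_eq_abs] using this
    have hintaz : ∀ z : Fin n → X, Integrable (fun a => F' (a, z)) μ := fun z =>
      integrable_of_bdd (hF'.comp (measurable_id.prodMk measurable_const))
        (fun a => hM (e.symm (a, z)))
    have hGosc : ∀ (z z' : Fin n → X) (j' : Fin n), (∀ k, k ≠ j' → z k = z' k) →
        |G z - G z'| ≤ c := by
      intro z z' j' hzz
      have hsub : G z - G z' = ∫ a, (F' (a, z) - F' (a, z')) ∂μ :=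
        (integral_sub (hintaz z) (hintaz z')).symm
      rw [hsub]
      have := norm_integral_le_of_norm_le_const (μ := μ)
        (f := fun a => F' (a, z) - F' (a, z')) (C := c)
        (ae_of_all _ fun a => by
          rw [Real.norm_eq_abs]
          exact hFc _ _ ((0 : Fin (n+1)).succAbove j') (fact2 a z z' j' hzz))
      simpa [Real.norm_eq_abs] using this
    have hintF' : Integrable F' (μ.prod ν) := integrable_of_bdd hF' (fun w => hM _)
    have hintF'2 : Integrable (fun w => F' w ^ 2) (μ.prod ν) :=
      integrable_of_bdd (hF'.pow_const 2) (M := M ^ 2) (fun w => by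
        rw [abs_pow]; exact pow_le_pow_left₀ (abs_nonneg _) (hM _) 2)
    have I1 : ∫ x, F x ∂Measure.pi (fun _ : Fin (n+1) => μ) = ∫ z, G z ∂ν := by
      rw [← hmps.integral_comp e.symm.measurableEmbedding F]
      exact integral_prod_symm F' hintF'
    have I2 : ∫ x, F x ^ 2 ∂Measure.pi (fun _ : Fin (n+1) => μ) = ∫ z, H z ∂ν := by
      rw [← hmps.integral_comp e.symm.measurableEmbedding (fun x => F x ^ 2)]
      exact integral_prod_symm (fun w => F' w ^ 2) hintF'2
    have hintG : Integrable G ν := integrable_of_bdd hGmeas hGbd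
    have hintG2 : Integrable (fun z => G z ^ 2) ν :=
      integrable_of_bdd (hGmeas.pow_const 2) (M := M ^ 2) (fun z => by
        rw [abs_pow]; exact pow_le_pow_left₀ (abs_nonneg _) (hGbd z) 2)
    have hintH : Integrable H ν := integrable_of_bdd hHmeas hHbd
    have step1 : ∫ z, H z ∂ν - ∫ z, G z ^ 2 ∂ν ≤ c ^ 2 := by
      rw [← integral_sub hintH hintG2]
      calc ∫ z, (H z - G z ^ 2) ∂ν ≤ ∫ _z, c ^ 2 ∂ν := by
            refine integral_mono (hintH.sub hintG2) (integrable_const _) fun z => ?_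
            exact var_le_of_osc μ (hF'.comp (measurable_id.prodMk measurable_const))
              (fun a => hM (e.symm (a, z)))
              (fun a b => hFc _ _ 0 (fun j hj => fact1 a b z j hj))
        _ = c ^ 2 := by simp
    have step2 : ∫ z, G z ^ 2 ∂ν - (∫ z, G z ∂ν) ^ 2 ≤ n * c ^ 2 :=
      IH G hGmeas hGbd (fun z z' j' h => hGosc z z' j' (fun k hk => h k hk))
    rw [I1, I2]
    push_cast
    linarith

lemma exists_median {Y : Type*} [MeasurableSpace Y] (ν : Measure Y) [IsProbabilityMeasure ν]
    {f : Y → ℝ} (hf : Measurable f) {M : ℝ} (hM : ∀ x, |f x| ≤ M) :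
    ∃ m : ℝ, 2⁻¹ ≤ ν {x | f x ≤ m} ∧ 2⁻¹ ≤ ν {x | m ≤ f x} := by
  have hY : Nonempty Y := by
    by_contra hY
    have he : (Set.univ : Set Y) = ∅ := Set.univ_eq_empty_iff.mpr (not_nonempty_iff.mp hY)
    have h1 := measure_univ (μ := ν)
    rw [he, measure_empty] at h1
    exact zero_ne_one h1
  have hinv0 : Tendsto (fun k : ℕ => ((k:ℝ)+1)⁻¹) atTop (𝓝 0) :=
    tendsto_one_div_add_atTop_nhds_zero_nat.congr (fun k => by rw [one_div])
  have hmono : ∀ i j : ℕ, i ≤ j → ((j:ℝ)+1)⁻¹ ≤ ((i:ℝ)+1)⁻¹ := by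
    intro i j hij
    have hcast : ((i:ℝ)+1) ≤ ((j:ℝ)+1) := by exact_mod_cast Nat.succ_le_succ hij
    exact inv_anti₀ (by positivity) hcast
  set T := {s : ℝ | 2⁻¹ ≤ ν {x | f x ≤ s}} with hT
  have hTne : M ∈ T := by
    have h2 : {x | f x ≤ M} = Set.univ := by
      ext x; simpa using le_trans (le_abs_self _) (hM x)
    simp [hT, h2]
  have hTbdd : BddBelow T := by
    refine ⟨-M, fun s hs => ?_⟩
    by_contra hsM
    push_neg at hsM
    have hempty : {x | f x ≤ s} = ∅ := by
      ext x
      simp only [Set.mem_setOf_eq, Set.mem_empty_iff_false, iff_false, not_le]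
      have h3 := neg_abs_le (f x)
      have h4 := hM x
      nlinarith [abs_nonneg (f x)]
    rw [hT, Set.mem_setOf_eq, hempty] at hs
    simp at hs
  set m := sInf T with hm
  refine ⟨m, ?_, ?_⟩
  · have hseq : {x | f x ≤ m} = ⋂ k : ℕ, {x | f x ≤ m + ((k:ℝ)+1)⁻¹} := by
      ext x
      simp only [Set.mem_setOf_eq, Set.mem_iInter]
      constructor
      · intro h k
        have h5 : (0:ℝ) < ((k:ℝ)+1)⁻¹ := by positivity
        linarith
      · intro h
        have hlim : Tendsto (fun k : ℕ => m + ((k:ℝ)+1)⁻¹) atTop (𝓝 m) := by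
          simpa using tendsto_const_nhds.add hinv0
        exact ge_of_tendsto hlim (Eventually.of_forall h)
    have hmem : ∀ k : ℕ, 2⁻¹ ≤ ν {x | f x ≤ m + ((k:ℝ)+1)⁻¹} := by
      intro k
      have hlt : m < m + ((k:ℝ)+1)⁻¹ := by
        have h5 : (0:ℝ) < ((k:ℝ)+1)⁻¹ := by positivity
        linarith
      obtain ⟨s, hsT, hs⟩ := (csInf_lt_iff hTbdd ⟨M, hTne⟩).mp hlt
      exact le_trans hsT (measure_mono (fun x hx => le_trans hx hs.le))
    rw [hseq]
    refine ge_of_tendsto (tendsto_measure_iInter_atTop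
      (fun k => (measurableSet_le hf measurable_const).nullMeasurableSet) ?_
      ⟨0, measure_ne_top _ _⟩) (Eventually.of_forall hmem)
    intro i j hij x hx
    simp only [Set.mem_setOf_eq] at hx ⊢
    linarith [hmono i j hij]
  · have hseq : {x | m ≤ f x} = ⋂ k : ℕ, {x | m - ((k:ℝ)+1)⁻¹ < f x} := by
      ext x
      simp only [Set.mem_setOf_eq, Set.mem_iInter]
      constructor
      · intro h k
        have h5 : (0:ℝ) < ((k:ℝ)+1)⁻¹ := by positivity
        linarith
      · intro h
        have hlim : Tendsto (fun k : ℕ => m - ((k:ℝ)+1)⁻¹) atTop (𝓝 m) := by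
          simpa using tendsto_const_nhds.sub hinv0
        exact le_of_tendsto hlim (Eventually.of_forall (fun k => (h k).le))
    have hmem : ∀ k : ℕ, 2⁻¹ ≤ ν {x | m - ((k:ℝ)+1)⁻¹ < f x} := by
      intro k
      have hnotT : m - ((k:ℝ)+1)⁻¹ ∉ T := by
        intro hmem
        have h6 := csInf_le hTbdd hmem
        have h5 : (0:ℝ) < ((k:ℝ)+1)⁻¹ := by positivity
        rw [← hm] at h6
        linarith
      rw [hT, Set.mem_setOf_eq, not_le] at hnotT
      have hcompl : {x | m - ((k:ℝ)+1)⁻¹ < f x} = {x | f x ≤ m - ((k:ℝ)+1)⁻¹}ᶜ := by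
        ext x; simp [not_le]
      rw [hcompl, measure_compl (measurableSet_le hf measurable_const)
        (measure_ne_top _ _), measure_univ]
      calc (2⁻¹ : ℝ≥0∞) = 1 - 2⁻¹ := ENNReal.one_sub_inv_two.symm
        _ ≤ 1 - ν {x | f x ≤ m - ((k:ℝ)+1)⁻¹} := tsub_le_tsub_left hnotT.le 1
    rw [hseq]
    refine ge_of_tendsto (tendsto_measure_iInter_atTop
      (fun k => (measurableSet_lt measurable_const hf).nullMeasurableSet) ?_
      ⟨0, measure_ne_top _ _⟩) (Eventually.of_forall hmem)
    intro i j hij x hx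
    simp only [Set.mem_setOf_eq] at hx ⊢
    linarith [hmono i j hij]

lemma conc_of_set {X : Type*} [MetricSpace X] [TopologicalSpace.SeparableSpace X]
    [MeasurableSpace X] [BorelSpace X] (μ : Measure X) [IsProbabilityMeasure μ]
    {D : ℝ} (hD : 0 < D) (hdist : ∀ a b : X, dist a b ≤ D)
    {n : ℕ} (hn : 1 ≤ n) {κ : ℝ} (hκ : 0 < κ)
    {A : Set (Fin n → X)} (hA : MeasurableSet A)
    (hhalf : 2⁻¹ ≤ Measure.pi (fun _ : Fin n => μ) A) :
    ∃ S : Set (Fin n → X), MeasurableSet S ∧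
      Measure.pi (fun _ : Fin n => μ) Sᶜ ≤ ENNReal.ofReal (κ/4) ∧
      ∀ x ∈ S, ∃ a ∈ A, (∑ i, dist (x i) (a i)) <
        Real.sqrt (2*n*D^2) + Real.sqrt (4*n*D^2/κ) := by
  set ν := Measure.pi (fun _ : Fin n => μ) with hν
  have hXne : Nonempty X := by
    by_contra hY
    have he : (Set.univ : Set X) = ∅ := Set.univ_eq_empty_iff.mpr (not_nonempty_iff.mp hY)
    have h1 := measure_univ (μ := μ)
    rw [he, measure_empty] at h1
    exact zero_ne_one h1
  have hAne : A.Nonempty := by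
    refine nonempty_of_measure_ne_zero (μ := ν) (fun h0 => ?_)
    rw [h0] at hhalf
    simp at hhalf
  obtain ⟨a₀, ha₀⟩ := hAne
  set d1 : (Fin n → X) → (Fin n → X) → ℝ := fun x y => ∑ i, dist (x i) (y i) with hd1
  have hd1nn : ∀ x y, 0 ≤ d1 x y := fun x y => Finset.sum_nonneg (fun i _ => dist_nonneg)
  have hd1le : ∀ x y, d1 x y ≤ n * D := by
    intro x y
    calc d1 x y ≤ ∑ _i : Fin n, D := Finset.sum_le_sum (fun i _ => hdist _ _)
      _ = n * D := by simp [mul_comm]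
  have hd1tri : ∀ x y z, d1 x z ≤ d1 x y + d1 y z := by
    intro x y z
    rw [hd1, ← Finset.sum_add_distrib]
    exact Finset.sum_le_sum (fun i _ => dist_triangle _ _ _)
  have hd1symm : ∀ x y, d1 x y = d1 y x := fun x y =>
    Finset.sum_congr rfl (fun i _ => dist_comm _ _)
  set F : (Fin n → X) → ℝ := fun x => sInf ((fun a => d1 x a) '' A) with hF
  have hbdd : ∀ x, BddBelow ((fun a => d1 x a) '' A) := by
    intro x
    exact ⟨0, fun b ⟨a, _, hab⟩ => hab ▸ hd1nn x a⟩
  have himne : ∀ x, ((fun a => d1 x a) '' A).Nonempty := fun x => ⟨d1 x a₀, a₀, ha₀, rfl⟩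
  have hFnn : ∀ x, 0 ≤ F x := fun x => le_csInf (himne x) (fun b ⟨a, _, hab⟩ => hab ▸ hd1nn x a)
  have hF0 : ∀ a ∈ A, F a = 0 := by
    intro a ha
    refine le_antisymm ?_ (hFnn a)
    have : d1 a a = 0 := by simp [hd1]
    exact this ▸ csInf_le (hbdd a) ⟨a, ha, rfl⟩
  have hFle : ∀ x y, F x ≤ F y + d1 x y := by
    intro x y
    have h1 : ∀ b ∈ (fun a => d1 y a) '' A, F x - d1 x y ≤ b := by
      rintro b ⟨a, ha, rfl⟩
      have h2 : F x ≤ d1 x a := csInf_le (hbdd x) ⟨a, ha, rfl⟩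
      have h3 := hd1tri x y a
      linarith
    linarith [le_csInf (himne y) h1]
  have hFabs : ∀ x y, |F x - F y| ≤ d1 x y := by
    intro x y
    rw [abs_sub_le_iff]
    constructor
    · linarith [hFle x y]
    · rw [hd1symm x y] at *
      linarith [hFle y x]
  have hFbd : ∀ x, |F x| ≤ n * D := by
    intro x
    rw [abs_of_nonneg (hFnn x)]
    exact le_trans (csInf_le (hbdd x) ⟨a₀, ha₀, rfl⟩) (hd1le x a₀)
  haveI : SecondCountableTopology X := UniformSpace.secondCountable_of_separable X
  have hFmeas : Measurable F := by
    have hlip : LipschitzWith (n : ℝ≥0) F := by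
      refine LipschitzWith.of_dist_le_mul (fun x y => ?_)
      rw [Real.dist_eq]
      have hc : (((n : ℝ≥0)) : ℝ) = (n : ℝ) := by norm_cast
      rw [hc]
      refine le_trans (hFabs x y) ?_
      calc d1 x y ≤ ∑ _i : Fin n, dist x y := Finset.sum_le_sum
            (fun i _ => dist_le_pi_dist x y i)
        _ = n * dist x y := by simp [mul_comm]
    exact hlip.continuous.measurable
  have hFosc : ∀ (x y : Fin n → X) (i : Fin n), (∀ j, j ≠ i → x j = y j) → |F x - F y| ≤ D := by
    intro x y i hxy
    refine le_trans (hFabs x y) ?_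
    have h9 : d1 x y = dist (x i) (y i) := by
      show (∑ j, dist (x j) (y j)) = dist (x i) (y i)
      rw [Finset.sum_eq_single i]
      · intro j _ hj
        rw [hxy j hj]
        simp
      · simp
    rw [h9]
    exact hdist _ _
  have hmem2 : MeasureTheory.MemLp F 2 ν :=
    MeasureTheory.MemLp.of_bound hFmeas.aestronglyMeasurable (n * D)
      (ae_of_all _ fun x => by rw [Real.norm_eq_abs]; exact hFbd x)
  have hvar : ProbabilityTheory.variance F ν ≤ n * D ^ 2 := by
    rw [ProbabilityTheory.variance_eq_sub hmem2]
    have := efron_stein μ n F hFmeas hFbd hFosc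
    simpa [Pi.pow_apply] using this
  set E := ∫ x, F x ∂ν with hE
  have hEnn : 0 ≤ E := integral_nonneg hFnn
  have hEle : E ≤ Real.sqrt (2*n*D^2) := by
    rcases eq_or_lt_of_le hEnn with hE0 | hE0
    · rw [← hE0]; exact Real.sqrt_nonneg _
    · rw [Real.le_sqrt hEnn (by positivity)]
      have hcheb := ProbabilityTheory.meas_ge_le_variance_div_sq (μ := ν) hmem2 hE0
      have hsub : A ⊆ {x | E ≤ |F x - ∫ x, F x ∂ν|} := by
        intro a ha
        simp only [Set.mem_setOf_eq, ← hE]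
        rw [hF0 a ha]
        rw [abs_sub_comm, sub_zero]
        rw [abs_of_nonneg hEnn]
      have h5 : (2⁻¹ : ℝ≥0∞) ≤ ENNReal.ofReal (ProbabilityTheory.variance F ν / E ^ 2) :=
        le_trans hhalf (le_trans (measure_mono hsub) hcheb)
      have h6 : (2⁻¹ : ℝ) ≤ ProbabilityTheory.variance F ν / E ^ 2 := by
        rw [← ENNReal.ofReal_le_ofReal_iff
          (div_nonneg (ProbabilityTheory.variance_nonneg _ _) (sq_nonneg _))]
        refine le_trans (le_of_eq ?_) h5
        rw [ENNReal.ofReal_inv_of_pos (by norm_num), ENNReal.ofReal_ofNat]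
      rw [le_div_iff₀ (by positivity)] at h6
      nlinarith [hvar]
  set s := Real.sqrt (4*n*D^2/κ) with hs
  have hspos : 0 < s := Real.sqrt_pos.mpr (by positivity)
  have hs2 : s ^ 2 = 4*n*D^2/κ := Real.sq_sqrt (by positivity)
  set r := Real.sqrt (2*n*D^2) + s with hr
  refine ⟨{x | F x < r}, hFmeas measurableSet_Iio, ?_, ?_⟩
  · have hcompl : {x | F x < r}ᶜ = {x | r ≤ F x} := by
      ext x; simp [not_lt]
    rw [hcompl]
    have hsub : {x | r ≤ F x} ⊆ {x | s ≤ |F x - ∫ x, F x ∂ν|} := by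
      intro x hx
      simp only [Set.mem_setOf_eq, ← hE] at hx ⊢
      have h8 : s ≤ F x - E := by rw [hr] at hx; linarith
      rw [abs_of_nonneg (by linarith)]
      exact h8
    refine le_trans (measure_mono hsub)
      (le_trans (ProbabilityTheory.meas_ge_le_variance_div_sq hmem2 hspos) ?_)
    refine ENNReal.ofReal_le_ofReal ?_
    rw [hs2]
    rw [div_le_iff₀ (by positivity)]
    have h7 : (0:ℝ) < (n:ℝ) := by exact_mod_cast hn
    calc ProbabilityTheory.variance F ν ≤ n * D ^ 2 := hvar
      _ = κ/4 * (4*n*D^2/κ) := by field_simp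
  · intro x hx
    simp only [Set.mem_setOf_eq] at hx
    obtain ⟨b, ⟨a, ha, rfl⟩, hb⟩ := (csInf_lt_iff (hbdd x) (himne x)).mp hx
    exact ⟨a, ha, hb⟩

lemma partialDiam_nonneg (ν : Measure ℝ) (α : ℝ) : 0 ≤ partialDiam ν α :=
  Real.sInf_nonneg (fun r ⟨A, _, _, _, hr⟩ => hr ▸ Metric.diam_nonneg)

lemma partialDiam_le (ν : Measure ℝ) (α : ℝ) {A : Set ℝ} (hA : MeasurableSet A)
    (hAb : IsBounded A) (hle : ENNReal.ofReal α ≤ ν A) :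
    partialDiam ν α ≤ Metric.diam A :=
  csInf_le ⟨0, fun r ⟨A', _, _, _, hr⟩ => hr ▸ Metric.diam_nonneg⟩ ⟨A, hA, hAb, hle, rfl⟩

lemma key_bound {X : Type*} [MetricSpace X] [TopologicalSpace.SeparableSpace X]
    [MeasurableSpace X] [BorelSpace X] (μ : Measure X) [IsProbabilityMeasure μ]
    {D : ℝ} (hD : 0 < D) (hdist : ∀ a b : X, dist a b ≤ D)
    {n : ℕ} (hn : 1 ≤ n) {κ : ℝ} (hκ : 0 < κ)
    {f : (Fin n → X) → ℝ} (hf : Measurable f)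
    {L β : ℝ} (hL : 0 ≤ L) (hβ : 0 ≤ β)
    (hHold : ∀ x y : Fin n → X, |f x - f y| ≤ L * (∑ i, dist (x i) (y i)) ^ β) :
    partialDiam ((Measure.pi (fun _ : Fin n => μ)).map f) (1 - κ) ≤
      2 * (L * (Real.sqrt (2*n*D^2) + Real.sqrt (4*n*D^2/κ)) ^ β) := by
  set ν := Measure.pi (fun _ : Fin n => μ) with hν
  have hXne : Nonempty X := by
    by_contra hY
    have he : (Set.univ : Set X) = ∅ := Set.univ_eq_empty_iff.mpr (not_nonempty_iff.mp hY)
    have h1 := measure_univ (μ := μ)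
    rw [he, measure_empty] at h1
    exact zero_ne_one h1
  set c : Fin n → X := fun _ => Classical.arbitrary X with hc
  have hd1nn : ∀ x y : Fin n → X, (0:ℝ) ≤ ∑ i, dist (x i) (y i) :=
    fun x y => Finset.sum_nonneg (fun i _ => dist_nonneg)
  have hd1le : ∀ x y : Fin n → X, ∑ i, dist (x i) (y i) ≤ n * D := by
    intro x y
    calc ∑ i, dist (x i) (y i) ≤ ∑ _i : Fin n, D := Finset.sum_le_sum (fun i _ => hdist _ _)
      _ = n * D := by simp [mul_comm]
  have hfb : ∀ x, |f x| ≤ |f c| + L * ((n:ℝ) * D) ^ β := by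
    intro x
    have h1 := hHold x c
    have h2 : (∑ i, dist (x i) (c i)) ^ β ≤ ((n:ℝ) * D) ^ β :=
      Real.rpow_le_rpow (hd1nn x c) (hd1le x c) hβ
    have h3 : |f x| ≤ |f x - f c| + |f c| := by
      calc |f x| = |(f x - f c) + f c| := by ring_nf
        _ ≤ |f x - f c| + |f c| := abs_add_le _ _
    have h4 : L * (∑ i, dist (x i) (c i)) ^ β ≤ L * ((n:ℝ) * D) ^ β :=
      mul_le_mul_of_nonneg_left h2 hL
    linarith
  obtain ⟨m, hmA, hmB⟩ := exists_median ν hf hfb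
  set r := Real.sqrt (2*n*D^2) + Real.sqrt (4*n*D^2/κ) with hr
  have hrnn : 0 ≤ r := add_nonneg (Real.sqrt_nonneg _) (Real.sqrt_nonneg _)
  set R := L * r ^ β with hR
  have hRnn : 0 ≤ R := mul_nonneg hL (Real.rpow_nonneg hrnn _)
  obtain ⟨S₁, hS₁m, hS₁c, hS₁⟩ := conc_of_set μ hD hdist hn hκ
    (measurableSet_le hf measurable_const) hmA
  obtain ⟨S₂, hS₂m, hS₂c, hS₂⟩ := conc_of_set μ hD hdist hn hκ
    (measurableSet_le measurable_const hf) hmB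
  have hgood : ∀ x ∈ S₁ ∩ S₂, f x ∈ Set.Icc (m - R) (m + R) := by
    rintro x ⟨hx₁, hx₂⟩
    obtain ⟨a, ha, hda⟩ := hS₁ x hx₁
    obtain ⟨b, hb, hdb⟩ := hS₂ x hx₂
    constructor
    · have h1 := hHold x b
      have h2 : (∑ i, dist (x i) (b i)) ^ β ≤ r ^ β :=
        Real.rpow_le_rpow (hd1nn x b) hdb.le hβ
      have h3 : L * (∑ i, dist (x i) (b i)) ^ β ≤ R := by
        rw [hR]; exact mul_le_mul_of_nonneg_left h2 hL
      have h4 : f b - f x ≤ |f x - f b| := by rw [abs_sub_comm]; exact le_abs_self _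
      have h5 : (m:ℝ) ≤ f b := hb
      linarith
    · have h1 := hHold x a
      have h2 : (∑ i, dist (x i) (a i)) ^ β ≤ r ^ β :=
        Real.rpow_le_rpow (hd1nn x a) hda.le hβ
      have h3 : L * (∑ i, dist (x i) (a i)) ^ β ≤ R := by
        rw [hR]; exact mul_le_mul_of_nonneg_left h2 hL
      have h4 : f x - f a ≤ |f x - f a| := le_abs_self _
      have h5 : f a ≤ m := ha
      linarith
  have hmeasure : ENNReal.ofReal (1 - κ) ≤ ν (f ⁻¹' Set.Icc (m - R) (m + R)) := by
    have hsub : S₁ ∩ S₂ ⊆ f ⁻¹' Set.Icc (m - R) (m + R) := fun x hx => hgood x hx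
    have hcc : (S₁ ∩ S₂)ᶜ = S₁ᶜ ∪ S₂ᶜ := by rw [Set.compl_inter]
    have h6 : ν (S₁ ∩ S₂)ᶜ ≤ ENNReal.ofReal (κ/2) := by
      rw [hcc]
      refine le_trans (measure_union_le _ _) ?_
      calc ν S₁ᶜ + ν S₂ᶜ ≤ ENNReal.ofReal (κ/4) + ENNReal.ofReal (κ/4) :=
            add_le_add hS₁c hS₂c
        _ = ENNReal.ofReal (κ/2) := by
            rw [← ENNReal.ofReal_add (by positivity) (by positivity)]
            congr 1
            ring
    have h7 : ν (S₁ ∩ S₂) = 1 - ν (S₁ ∩ S₂)ᶜ := by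
      have h8 := prob_compl_eq_one_sub (μ := ν) ((hS₁m.inter hS₂m).compl)
      rwa [compl_compl] at h8
    calc ENNReal.ofReal (1 - κ) ≤ ENNReal.ofReal (1 - κ/2) :=
          ENNReal.ofReal_le_ofReal (by linarith)
      _ = 1 - ENNReal.ofReal (κ/2) := by
          rw [ENNReal.ofReal_sub 1 (by positivity), ENNReal.ofReal_one]
      _ ≤ 1 - ν (S₁ ∩ S₂)ᶜ := tsub_le_tsub_left h6 1
      _ = ν (S₁ ∩ S₂) := h7.symm
      _ ≤ ν (f ⁻¹' Set.Icc (m - R) (m + R)) := measure_mono hsub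
  have hmap : (ν.map f) (Set.Icc (m - R) (m + R)) = ν (f ⁻¹' Set.Icc (m - R) (m + R)) :=
    Measure.map_apply hf measurableSet_Icc
  have hfinal := partialDiam_le (ν.map f) (1 - κ) measurableSet_Icc
    (Metric.isBounded_Icc _ _) (by rw [hmap]; exact hmeasure)
  rw [Real.diam_Icc (by linarith)] at hfinal
  calc partialDiam (ν.map f) (1 - κ) ≤ (m + R) - (m - R) := hfinal
    _ = 2 * R := by ring
    _ = 2 * (L * r ^ β) := by rw [hR]

lemma obsDiam_bounds {Y : Type*} [MeasurableSpace Y] (d : Y → Y → ℝ) (ν : Measure Y)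
    (κ B : ℝ) (hB : 0 ≤ B) (hd : ∀ x y, 0 ≤ d x y)
    (hbound : ∀ f : Y → ℝ, Measurable f → (∀ x y, |f x - f y| ≤ d x y) →
      partialDiam (ν.map f) (1 - κ) ≤ B) :
    0 ≤ sSup {r : ℝ | ∃ f : Y → ℝ, Measurable f ∧ (∀ x y, |f x - f y| ≤ d x y) ∧
      r = partialDiam (ν.map f) (1 - κ)} ∧
    sSup {r : ℝ | ∃ f : Y → ℝ, Measurable f ∧ (∀ x y, |f x - f y| ≤ d x y) ∧
      r = partialDiam (ν.map f) (1 - κ)} ≤ B := by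
  set S := {r : ℝ | ∃ f : Y → ℝ, Measurable f ∧ (∀ x y, |f x - f y| ≤ d x y) ∧
      r = partialDiam (ν.map f) (1 - κ)} with hS
  have hmem0 : partialDiam (ν.map (fun _ => (0:ℝ))) (1 - κ) ∈ S :=
    ⟨fun _ => 0, measurable_const, fun x y => by simpa using hd x y, rfl⟩
  have hbdd : BddAbove S := ⟨B, fun r ⟨f, hfm, hfl, hfr⟩ => hfr ▸ hbound f hfm hfl⟩
  constructor
  · exact le_trans (partialDiam_nonneg _ _) (le_csSup hbdd hmem0)
  · exact Real.sSup_le (fun r ⟨f, hfm, hfl, hfr⟩ => hfr ▸ hbound f hfm hfl) hB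

/-- The observable diameter `ObsDiam(X; -κ)` with respect to an explicit distance `d`. -/
def obsDiam {X : Type*} [MeasurableSpace X] (d : X → X → ℝ)
    (μ : Measure X) (κ : ℝ) : ℝ :=
  sSup {r : ℝ | ∃ f : X → ℝ, Measurable f ∧ (∀ x y, |f x - f y| ≤ d x y) ∧
    r = partialDiam (μ.map f) (1 - κ)}

/-- The `l_p`-distance on the `n`-fold product for `1 ≤ p < ∞`. -/
def lpDist {X : Type*} (d : X → X → ℝ) (p : ℝ) {n : ℕ} (x y : Fin n → X) : ℝ :=
  (∑ i, d (x i) (y i) ^ p) ^ (1 / p)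

/-- The `l_p`-distance on the `n`-fold product for `1 ≤ p ≤ ∞`
(`l_∞` is the sup distance). -/
def lpDist' {X : Type*} (d : X → X → ℝ) (p : ℝ≥0∞) {n : ℕ} (x y : Fin n → X) : ℝ :=
  if p = ∞ then ⨆ i, d (x i) (y i) else lpDist d p.toReal x y

/-- **Corollary 1.4 (1).** Let `X` be a nontrivial mm-space of finite diameter,
`1 ≤ p ≤ ∞`, `δ`-discrete for some `δ > 0` in case `1 < p < ∞`.
If `n^(1/(2p)) t_n → 0` (with `n^(1/(2∞)) := 1`), then `{t_n X_p^n}` is a Lévy family. -/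
theorem levy_family_of_subcritical_scale
    {X : Type*} [MetricSpace X] [CompleteSpace X] [TopologicalSpace.SeparableSpace X]
    [MeasurableSpace X] [BorelSpace X]
    (μ : Measure X) [IsProbabilityMeasure μ]
    (hnt : ∀ x : X, μ ≠ Measure.dirac x)
    (hbdd : IsBounded (Set.univ : Set X))
    (p : ℝ≥0∞) (hp : 1 ≤ p)
    (hdisc : 1 < p → p ≠ ∞ → ∃ δ > (0 : ℝ), ∀ x y : X, x ≠ y → δ ≤ dist x y)
    (t : ℕ → ℝ) (ht : ∀ n, 0 < t n)
    (h0 : Tendsto (fun n : ℕ =>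
        (if p = ∞ then 1 else (n : ℝ) ^ (1 / (2 * p.toReal))) * t n) atTop (𝓝 0))
    (κ : ℝ) (hκ : 0 < κ) :
    Tendsto (fun n : ℕ =>
      obsDiam (fun x y : Fin n → X => t n * lpDist' dist p x y)
        (Measure.pi fun _ : Fin n => μ) κ) atTop (𝓝 0) := by
  classical
  have hXne : Nonempty X := by
    by_contra hY
    have he : (Set.univ : Set X) = ∅ := Set.univ_eq_empty_iff.mpr (not_nonempty_iff.mp hY)
    have h1 := measure_univ (μ := μ)
    rw [he, measure_empty] at h1
    exact zero_ne_one h1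
  set D := Metric.diam (Set.univ : Set X) with hDdef
  have hdistD : ∀ a b : X, dist a b ≤ D := fun a b =>
    Metric.dist_le_diam_of_mem hbdd trivial trivial
  have hD0 : 0 < D := by
    rcases lt_or_ge 0 D with h | h
    · exact h
    · exfalso
      have hsub : ∀ a b : X, a = b := fun a b =>
        dist_le_zero.mp (le_trans (hdistD a b) h)
      obtain ⟨c⟩ := hXne
      refine hnt c ?_
      refine Measure.ext (fun s hs => ?_)
      by_cases hc : c ∈ s
      · have hsuniv : s = Set.univ := Set.eq_univ_of_forall (fun x => (hsub x c) ▸ hc)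
        rw [hsuniv]
        simp [measure_univ]
      · have hsempty : s = ∅ := Set.eq_empty_iff_forall_notMem.mpr
          (fun x hx => hc ((hsub x c) ▸ hx))
        rw [hsempty]
        simp
  by_cases hp₁ : p = ∞
  · -- the `l_∞` case
    have hseq : Tendsto (fun n : ℕ => t n) atTop (𝓝 0) := by
      have := h0
      simp only [hp₁, if_pos] at this
      simpa using this
    have hlim : Tendsto (fun n : ℕ => 2 * (t n * D)) atTop (𝓝 0) := by
      have := hseq.const_mul (2 * D)
      simpa [mul_comm, mul_assoc, mul_left_comm] using this
    have hbounds : ∀ n : ℕ,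
        0 ≤ obsDiam (fun x y : Fin n → X => t n * lpDist' dist p x y)
            (Measure.pi fun _ : Fin n => μ) κ ∧
        obsDiam (fun x y : Fin n → X => t n * lpDist' dist p x y)
            (Measure.pi fun _ : Fin n => μ) κ ≤ 2 * (t n * D) := by
      intro n
      have hd : ∀ x y : Fin n → X, 0 ≤ t n * lpDist' dist p x y := by
        intro x y
        refine mul_nonneg (ht n).le ?_
        rw [lpDist', if_pos hp₁]
        exact Real.iSup_nonneg (fun i => dist_nonneg)
      have hbound : ∀ f : (Fin n → X) → ℝ, Measurable f →
          (∀ x y, |f x - f y| ≤ t n * lpDist' dist p x y) →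
          partialDiam ((Measure.pi fun _ : Fin n => μ).map f) (1 - κ) ≤ 2 * (t n * D) := by
        intro f hf hlip
        set c : Fin n → X := fun _ => Classical.arbitrary X with hc
        have hIcc : ∀ x, f x ∈ Set.Icc (f c - t n * D) (f c + t n * D) := by
          intro x
          have h1 := hlip x c
          have h2 : lpDist' dist p x c ≤ D := by
            rw [lpDist', if_pos hp₁]
            exact Real.iSup_le (fun i => hdistD _ _) hD0.le
          have h3 : t n * lpDist' dist p x c ≤ t n * D :=
            mul_le_mul_of_nonneg_left h2 (ht n).le
          have h4 := abs_le.mp (le_trans h1 h3)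
          constructor <;> [linarith [h4.1]; linarith [h4.2]]
        have hpre : f ⁻¹' Set.Icc (f c - t n * D) (f c + t n * D) = Set.univ :=
          Set.eq_univ_of_forall hIcc
        have hmap : ((Measure.pi fun _ : Fin n => μ).map f)
            (Set.Icc (f c - t n * D) (f c + t n * D)) = 1 := by
          rw [Measure.map_apply hf measurableSet_Icc, hpre, measure_univ]
        have hfin := partialDiam_le ((Measure.pi fun _ : Fin n => μ).map f) (1 - κ)
          measurableSet_Icc (Metric.isBounded_Icc _ _)
          (by rw [hmap]; exact ENNReal.ofReal_le_one.mpr (by linarith))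
        rw [Real.diam_Icc (by nlinarith [(ht n).le, hD0.le])] at hfin
        calc partialDiam ((Measure.pi fun _ : Fin n => μ).map f) (1 - κ) ≤
              (f c + t n * D) - (f c - t n * D) := hfin
          _ = 2 * (t n * D) := by ring
      have hB : 0 ≤ 2 * (t n * D) := by nlinarith [(ht n).le, hD0.le]
      exact obsDiam_bounds _ _ κ _ hB hd hbound
    refine tendsto_of_tendsto_of_tendsto_of_le_of_le' tendsto_const_nhds hlim ?_ ?_
    · exact Eventually.of_forall (fun n => (hbounds n).1)
    · exact Eventually.of_forall (fun n => (hbounds n).2)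
  · -- the finite `p` case
    set q := p.toReal with hqdef
    have hq1 : 1 ≤ q := by
      have h1 := ENNReal.toReal_mono hp₁ hp
      simpa using h1
    have hq0 : 0 < q := lt_of_lt_of_le one_pos hq1
    set c₂ := Real.sqrt (2 * D ^ 2) + Real.sqrt (4 * D ^ 2 / κ) with hc₂
    have hc₂nn : 0 ≤ c₂ := add_nonneg (Real.sqrt_nonneg _) (Real.sqrt_nonneg _)
    set C := 2 * D ^ ((q - 1) / q) * c₂ ^ (1 / q) with hC
    have hCnn : 0 ≤ C := by
      refine mul_nonneg (by positivity) (Real.rpow_nonneg hc₂nn _)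
    have hseq : Tendsto (fun n : ℕ => (n : ℝ) ^ (1 / (2 * q)) * t n) atTop (𝓝 0) := by
      have := h0
      simp only [if_neg hp₁] at this
      exact this
    have hlim : Tendsto (fun n : ℕ => C * ((n : ℝ) ^ (1 / (2 * q)) * t n)) atTop (𝓝 0) := by
      have := hseq.const_mul C
      simpa [mul_comm] using this
    have hbounds : ∀ n : ℕ, 1 ≤ n →
        0 ≤ obsDiam (fun x y : Fin n → X => t n * lpDist' dist p x y)
            (Measure.pi fun _ : Fin n => μ) κ ∧
        obsDiam (fun x y : Fin n → X => t n * lpDist' dist p x y)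
            (Measure.pi fun _ : Fin n => μ) κ ≤ C * ((n : ℝ) ^ (1 / (2 * q)) * t n) := by
      intro n hn
      have hd : ∀ x y : Fin n → X, 0 ≤ t n * lpDist' dist p x y := by
        intro x y
        refine mul_nonneg (ht n).le ?_
        rw [lpDist', if_neg hp₁, lpDist]
        exact Real.rpow_nonneg (Finset.sum_nonneg (fun i _ => Real.rpow_nonneg dist_nonneg _)) _
      have hBeq : 2 * ((t n * D ^ ((q - 1) / q)) *
          (Real.sqrt (2 * n * D ^ 2) + Real.sqrt (4 * n * D ^ 2 / κ)) ^ (1 / q)) =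
          C * ((n : ℝ) ^ (1 / (2 * q)) * t n) := by
        have e1 : Real.sqrt (2 * n * D ^ 2) = Real.sqrt n * Real.sqrt (2 * D ^ 2) := by
          rw [show (2 * (n:ℝ) * D ^ 2) = (n:ℝ) * (2 * D ^ 2) by ring,
            Real.sqrt_mul (Nat.cast_nonneg n)]
        have e2 : Real.sqrt (4 * n * D ^ 2 / κ) = Real.sqrt n * Real.sqrt (4 * D ^ 2 / κ) := by
          rw [show (4 * (n:ℝ) * D ^ 2 / κ) = (n:ℝ) * (4 * D ^ 2 / κ) by ring,
            Real.sqrt_mul (Nat.cast_nonneg n)]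
        have e3 : Real.sqrt (2 * n * D ^ 2) + Real.sqrt (4 * n * D ^ 2 / κ) =
            Real.sqrt n * c₂ := by
          rw [e1, e2, hc₂]; ring
        have e4 : (Real.sqrt n * c₂) ^ (1 / q) =
            (Real.sqrt n) ^ (1 / q) * c₂ ^ (1 / q) :=
          Real.mul_rpow (Real.sqrt_nonneg _) hc₂nn
        have e5 : (Real.sqrt n : ℝ) ^ (1 / q) = (n : ℝ) ^ (1 / (2 * q)) := by
          rw [Real.sqrt_eq_rpow, ← Real.rpow_mul (Nat.cast_nonneg n)]
          congr 1
          rw [div_mul_div_comm, one_mul]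
        rw [e3, e4, e5]
        ring
      have hbound : ∀ f : (Fin n → X) → ℝ, Measurable f →
          (∀ x y, |f x - f y| ≤ t n * lpDist' dist p x y) →
          partialDiam ((Measure.pi fun _ : Fin n => μ).map f) (1 - κ) ≤
            C * ((n : ℝ) ^ (1 / (2 * q)) * t n) := by
        intro f hf hlip
        have hHold : ∀ x y : Fin n → X, |f x - f y| ≤
            (t n * D ^ ((q - 1) / q)) * (∑ i, dist (x i) (y i)) ^ (1 / q) := by
          intro x y
          refine le_trans (hlip x y) ?_
          rw [lpDist', if_neg hp₁, lpDist]
          rw [mul_assoc]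
          refine mul_le_mul_of_nonneg_left ?_ (ht n).le
          have hterm : ∀ i : Fin n, dist (x i) (y i) ^ q ≤ D ^ (q - 1) * dist (x i) (y i) := by
            intro i
            rcases eq_or_lt_of_le (dist_nonneg (x := x i) (y := y i)) with h | h
            · rw [← h, Real.zero_rpow hq0.ne', mul_zero]
            · have h1 : dist (x i) (y i) ^ q =
                  dist (x i) (y i) ^ (q - 1) * dist (x i) (y i) := by
                calc dist (x i) (y i) ^ q = dist (x i) (y i) ^ (q - 1 + 1) := by
                      congr 1
                      ring
                  _ = dist (x i) (y i) ^ (q - 1) * dist (x i) (y i) ^ (1:ℝ) :=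
                      Real.rpow_add h _ _
                  _ = dist (x i) (y i) ^ (q - 1) * dist (x i) (y i) := by
                      rw [Real.rpow_one]
              rw [h1]
              refine mul_le_mul_of_nonneg_right ?_ dist_nonneg
              exact Real.rpow_le_rpow dist_nonneg (hdistD _ _) (by linarith)
          have hsum : (∑ i, dist (x i) (y i) ^ q) ≤ D ^ (q - 1) * ∑ i, dist (x i) (y i) := by
            rw [Finset.mul_sum]
            exact Finset.sum_le_sum (fun i _ => hterm i)
          have hsumnn : (0:ℝ) ≤ ∑ i, dist (x i) (y i) :=
            Finset.sum_nonneg (fun i _ => dist_nonneg)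
          calc (∑ i, dist (x i) (y i) ^ q) ^ (1 / q) ≤
                (D ^ (q - 1) * ∑ i, dist (x i) (y i)) ^ (1 / q) :=
              Real.rpow_le_rpow
                (Finset.sum_nonneg (fun i _ => Real.rpow_nonneg dist_nonneg _)) hsum
                (by positivity)
            _ = D ^ ((q - 1) / q) * (∑ i, dist (x i) (y i)) ^ (1 / q) := by
              rw [Real.mul_rpow (Real.rpow_nonneg hD0.le _) hsumnn,
                ← Real.rpow_mul hD0.le, mul_one_div]
        have hkey := key_bound μ hD0 hdistD hn hκ hf
          (mul_nonneg (ht n).le (Real.rpow_nonneg hD0.le _)) (by positivity) hHold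
        rw [hBeq] at hkey
        exact hkey
      have hB : 0 ≤ C * ((n : ℝ) ^ (1 / (2 * q)) * t n) :=
        mul_nonneg hCnn (mul_nonneg (Real.rpow_nonneg (Nat.cast_nonneg n) _) (ht n).le)
      exact obsDiam_bounds _ _ κ _ hB hd hbound
    refine tendsto_of_tendsto_of_tendsto_of_le_of_le' tendsto_const_nhds hlim ?_ ?_
    · filter_upwards [eventually_ge_atTop 1] with n hn
      exact (hbounds n hn).1
    · filter_upwards [eventually_ge_atTop 1] with n hn
      exact (hbounds n hn).2
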